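/- arXiv:1506.01060 — 4 statements merged into one kernel-verified Lean document; each statement's English description precedes it below -/
import Mathlib

section
/- Let K be a positive integer, y ∈ ℝ^K, and λ > 0. Let I = {i : y_i > 0} be the index set of strictly positive components of y, and let y_I denote the vector agreeing with y on I and equal to 0 off I. Define x* ∈ ℝ^K by: x*_i = 0 for all i ∉ I; and on I, x*_I = 0 if ‖y_I‖₂ ≤ λ, while x*_I = ((‖y_I‖₂ − λ)/‖y_I‖₂) · y_I if ‖y_I‖₂ > λ. Then x* is the unique minimizer of the function x ↦ (1/2)‖x − y‖₂² + λ‖x‖₂ over the set {x ∈ ℝ^K : x_i ≥ 0 for all i}. -/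
open Finset

private lemma nsq {K : ℕ} (v : EuclideanSpace ℝ (Fin K)) : ‖v‖ ^ 2 = ∑ i, (v i) ^ 2 := by
  rw [EuclideanSpace.norm_sq_eq]
  simp [Real.norm_eq_abs, sq_abs]

private lemma core {K : ℕ} (lam : ℝ) (hlam : 0 < lam) (w xstar : EuclideanSpace ℝ (Fin K))
    (hx : xstar = if ‖w‖ ≤ lam then 0 else ((‖w‖ - lam) / ‖w‖) • w)
    (z : EuclideanSpace ℝ (Fin K)) :
    (1/2) * ‖xstar - w‖ ^ 2 + lam * ‖xstar‖ + (1/2) * ‖z - xstar‖ ^ 2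
      ≤ (1/2) * ‖z - w‖ ^ 2 + lam * ‖z‖ := by
  have hexp : ‖z - w‖ ^ 2
      = ‖z - xstar‖ ^ 2 + 2 * (inner ℝ (z - xstar) (xstar - w) : ℝ) + ‖xstar - w‖ ^ 2 := by
    have h := norm_add_sq_real (z - xstar) (xstar - w)
    rw [show z - xstar + (xstar - w) = z - w by abel] at h
    linarith
  have hcs := real_inner_le_norm z w
  have hz := norm_nonneg z
  have hkey : 0 ≤ (inner ℝ (z - xstar) (xstar - w) : ℝ) + lam * (‖z‖ - ‖xstar‖) := by
    by_cases hle : ‖w‖ ≤ lam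
    · rw [hx, if_pos hle]
      have h1 : (inner ℝ (z - 0) ((0 : EuclideanSpace ℝ (Fin K)) - w) : ℝ) = -(inner ℝ z w : ℝ) := by
        simp
      rw [h1]
      simp only [norm_zero]
      nlinarith
    · rw [hx, if_neg hle]
      have hlt : lam < ‖w‖ := lt_of_not_ge hle
      have hw0 : (0:ℝ) < ‖w‖ := lt_trans hlam hlt
      set c : ℝ := (‖w‖ - lam) / ‖w‖ with hc
      have hc0 : 0 ≤ c := div_nonneg (by linarith) hw0.le
      have hnorm : ‖c • w‖ = c * ‖w‖ := by
        rw [norm_smul, Real.norm_eq_abs, abs_of_nonneg hc0]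
      have hinner : (inner ℝ (z - c • w) (c • w - w) : ℝ)
          = c * (inner ℝ z w : ℝ) - (inner ℝ z w : ℝ) - c * c * ‖w‖^2 + c * ‖w‖^2 := by
        simp only [inner_sub_left, inner_sub_right, real_inner_smul_left, real_inner_smul_right]
        rw [real_inner_self_eq_norm_sq]
        ring
      rw [hinner, hnorm]
      have hcval : c * ‖w‖ = ‖w‖ - lam := by
        rw [hc, div_mul_cancel₀ _ hw0.ne']
      have hc1 : c - 1 = -lam / ‖w‖ := by
        rw [hc, eq_div_iff hw0.ne', sub_mul, div_mul_cancel₀ _ hw0.ne']; ring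
      -- reduce to λ (‖z‖ - ⟪z,w⟫/‖w‖) ≥ 0
      have hcs2 : lam * (inner ℝ z w : ℝ) ≤ lam * (‖z‖ * ‖w‖) :=
        mul_le_mul_of_nonneg_left hcs hlam.le
      have hexpand : c * (inner ℝ z w : ℝ) - (inner ℝ z w : ℝ) - c * c * ‖w‖^2 + c * ‖w‖^2
          + lam * (‖z‖ - c * ‖w‖)
          = (lam / ‖w‖) * (‖z‖ * ‖w‖ - (inner ℝ z w : ℝ)) := by
        rw [hcval]
        have : c * (inner ℝ z w : ℝ) - (inner ℝ z w : ℝ) = (c - 1) * (inner ℝ z w : ℝ) := by ring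
        rw [this, hc1]
        have h2 : c * c * ‖w‖^2 = (‖w‖ - lam) * (‖w‖ - lam) := by
          rw [show c * c * ‖w‖^2 = (c * ‖w‖) * (c * ‖w‖) by ring, hcval]
        have h3 : c * ‖w‖^2 = (‖w‖ - lam) * ‖w‖ := by
          rw [show c * ‖w‖^2 = (c * ‖w‖) * ‖w‖ by ring, hcval]
        rw [h2, h3]
        field_simp
        ring
      rw [hexpand]
      apply mul_nonneg (div_nonneg hlam.le hw0.le)
      linarith
  linarith [hexp, hkey]
/-- closed-form solution of the nonnegative proximal operator of `λ‖·‖₂`.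
`x*` (defined piecewise from the positive part `yI` of `y`) is the unique minimizer of
`x ↦ (1/2)‖x − y‖² + λ‖x‖` over the nonnegative orthant. -/
theorem prox_nonneg_group_lasso (K : ℕ) (hK : 0 < K)
    (y : EuclideanSpace ℝ (Fin K)) (lam : ℝ) (hlam : 0 < lam)
    (yI : EuclideanSpace ℝ (Fin K)) (hyI : ∀ i, yI i = if 0 < y i then y i else 0)
    (xstar : EuclideanSpace ℝ (Fin K))
    (hxstar : xstar = if ‖yI‖ ≤ lam then 0 else ((‖yI‖ - lam) / ‖yI‖) • yI) :
    (∀ i, 0 ≤ xstar i) ∧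
    (∀ x : EuclideanSpace ℝ (Fin K), (∀ i, 0 ≤ x i) →
      (1 / 2) * ‖xstar - y‖ ^ 2 + lam * ‖xstar‖ ≤ (1 / 2) * ‖x - y‖ ^ 2 + lam * ‖x‖) ∧
    (∀ x : EuclideanSpace ℝ (Fin K), (∀ i, 0 ≤ x i) →
      (1 / 2) * ‖x - y‖ ^ 2 + lam * ‖x‖ = (1 / 2) * ‖xstar - y‖ ^ 2 + lam * ‖xstar‖ →
      x = xstar) := by
  -- `xstar` vanishes off the positive support of `y`
  have hstar0 : ∀ i, ¬ 0 < y i → xstar i = 0 := by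
    intro i hi
    rw [hxstar]
    split_ifs with h
    · rfl
    · have : yI i = 0 := by rw [hyI i, if_neg hi]
      show ((‖yI‖ - lam) / ‖yI‖) • yI i = 0
      rw [this, smul_zero]
  -- part 1 : nonnegativity of xstar
  have part1 : ∀ i, 0 ≤ xstar i := by
    intro i
    rw [hxstar]
    split_ifs with h
    · exact le_refl 0
    · have hw0 : (0:ℝ) < ‖yI‖ := lt_trans hlam (lt_of_not_ge h)
      have hc0 : 0 ≤ (‖yI‖ - lam) / ‖yI‖ := div_nonneg (by linarith [lt_of_not_ge h]) hw0.le
      have hyi : 0 ≤ yI i := by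
        rw [hyI i]; split_ifs with hyi'
        · exact le_of_lt hyi'
        · exact le_refl 0
      exact mul_nonneg hc0 hyi
  -- the "junk" constant off the support
  set D : ℝ := ∑ i, (if 0 < y i then 0 else (y i) ^ 2) with hD
  -- xstar distance to y splits
  have F4 : ‖xstar - y‖ ^ 2 = ‖xstar - yI‖ ^ 2 + D := by
    rw [nsq, nsq, hD, ← Finset.sum_add_distrib]
    apply Finset.sum_congr rfl
    intro i _
    show (xstar i - y i) ^ 2 = (xstar i - yI i) ^ 2 + _
    by_cases hi : 0 < y i
    · rw [hyI i, if_pos hi, if_pos hi]; ring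
    · rw [hyI i, if_neg hi, if_neg hi, hstar0 i hi]; ring
  -- the key quantitative inequality
  have key : ∀ x : EuclideanSpace ℝ (Fin K), (∀ i, 0 ≤ x i) →
      (1 / 2) * ‖xstar - y‖ ^ 2 + lam * ‖xstar‖ + (1/4) * ‖x - xstar‖ ^ 2
        ≤ (1 / 2) * ‖x - y‖ ^ 2 + lam * ‖x‖ := by
    intro x hx
    set xI : EuclideanSpace ℝ (Fin K) := WithLp.toLp 2 (fun i => if 0 < y i then x i else 0) with hxI
    have hxIapp : ∀ i, xI i = if 0 < y i then x i else 0 := fun i => rfl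
    -- F1 : Pythagoras for the truncation
    have F1 : ‖x‖ ^ 2 = ‖xI‖ ^ 2 + ‖x - xI‖ ^ 2 := by
      rw [nsq, nsq, nsq, ← Finset.sum_add_distrib]
      apply Finset.sum_congr rfl
      intro i _
      show (x i)^2 = (xI i)^2 + (x i - xI i)^2
      rw [hxIapp i]
      by_cases hi : 0 < y i
      · rw [if_pos hi]; ring
      · rw [if_neg hi]; ring
    have F2 : ‖xI‖ ≤ ‖x‖ := by
      nlinarith [norm_nonneg x, norm_nonneg xI, norm_nonneg (x - xI), sq_nonneg (‖x‖ + ‖xI‖)]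
    have F3 : ‖xI - yI‖ ^ 2 + D + ‖x - xI‖ ^ 2 ≤ ‖x - y‖ ^ 2 := by
      rw [nsq, nsq, nsq, hD, ← Finset.sum_add_distrib, ← Finset.sum_add_distrib]
      apply Finset.sum_le_sum
      intro i _
      show (xI i - yI i)^2 + (if 0 < y i then 0 else (y i)^2) + (x i - xI i)^2
            ≤ (x i - y i)^2
      rw [hxIapp i, hyI i]
      by_cases hi : 0 < y i
      · rw [if_pos hi, if_pos hi, if_pos hi]; ring_nf; nlinarith [sq_nonneg (x i - y i)]
      · rw [if_neg hi, if_neg hi, if_neg hi]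
        have h1 : 0 ≤ x i := hx i
        have h2 : y i ≤ 0 := le_of_not_gt hi
        nlinarith [mul_nonneg h1 (neg_nonneg.mpr h2)]
    have hcore := core lam hlam yI xstar hxstar xI
    have htri : ‖x - xstar‖ ≤ ‖x - xI‖ + ‖xI - xstar‖ := by
      have h := norm_add_le (x - xI) (xI - xstar)
      rw [show x - xI + (xI - xstar) = x - xstar by abel] at h
      exact h
    have htri2 : ‖x - xstar‖ ^ 2 ≤ 2 * ‖x - xI‖ ^ 2 + 2 * ‖xI - xstar‖ ^ 2 := by
      nlinarith [norm_nonneg (x - xstar), norm_nonneg (x - xI), norm_nonneg (xI - xstar),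
        sq_nonneg (‖x - xI‖ - ‖xI - xstar‖)]
    have hlamF2 : lam * ‖xI‖ ≤ lam * ‖x‖ := mul_le_mul_of_nonneg_left F2 hlam.le
    rw [F4]
    linarith
  refine ⟨part1, ?_, ?_⟩
  · intro x hx
    have h := key x hx
    linarith [sq_nonneg ‖x - xstar‖]
  · intro x hx heq
    have h := key x hx
    have h0 : ‖x - xstar‖ ^ 2 ≤ 0 := by linarith
    have h1 : ‖x - xstar‖ = 0 := by
      have h2 : ‖x - xstar‖ ^ 2 = 0 := le_antisymm h0 (sq_nonneg _)
      exact pow_eq_zero_iff (two_ne_zero) |>.mp h2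
    exact sub_eq_zero.mp (norm_eq_zero.mp h1)
end

section
/- Let K be a positive integer, y ∈ ℝ^K, and λ > 0. If x* minimizes the function x ↦ (1/2)‖x − y‖₂² + λ‖x‖₂ over the set {x ∈ ℝ^K : x_i ≥ 0 для all i}, then x*_i = 0 for every index i with y_i ≤ 0. -/
lemma eucl_norm_sq_eq {K : ℕ} (v : EuclideanSpace ℝ (Fin K)) :
    ‖v‖ ^ 2 = ∑ j, (v j) ^ 2 := by
  rw [EuclideanSpace.norm_eq, Real.sq_sqrt]
  · simp [sq_abs]
  · positivity

/-- any minimizer of `x ↦ (1/2)‖x − y‖² + λ‖x‖` over the nonnegative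
orthant vanishes on every coordinate `i` with `y i ≤ 0`. -/
theorem prox_nonneg_group_lasso_zero_on_nonpos (K : ℕ) (hK : 0 < K)
    (y : EuclideanSpace ℝ (Fin K)) (lam : ℝ) (hlam : 0 < lam)
    (xstar : EuclideanSpace ℝ (Fin K)) (hxnn : ∀ i, 0 ≤ xstar i)
    (hmin : ∀ x : EuclideanSpace ℝ (Fin K), (∀ i, 0 ≤ x i) →
      (1 / 2) * ‖xstar - y‖ ^ 2 + lam * ‖xstar‖ ≤ (1 / 2) * ‖x - y‖ ^ 2 + lam * ‖x‖) :
    ∀ i, y i ≤ 0 → xstar i = 0 := by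
  intro i hyi
  set x : EuclideanSpace ℝ (Fin K) := WithLp.toLp 2 (Function.update xstar i 0) with hx
  have hxj : ∀ j, x j = if j = i then 0 else xstar j := by
    intro j
    show Function.update xstar i 0 j = _
    rw [Function.update_apply]
  have hxnn' : ∀ j, 0 ≤ x j := by
    intro j; rw [hxj]; split
    · exact le_refl 0
    · exact hxnn j
  have key := hmin x hxnn'
  have hA : ‖xstar - y‖ ^ 2 = ∑ j, (xstar j - y j) ^ 2 := by
    rw [eucl_norm_sq_eq]; simp
  have hB : ‖x - y‖ ^ 2 = ∑ j, (x j - y j) ^ 2 := by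
    rw [eucl_norm_sq_eq]; simp
  have hdiff : (∑ j, (xstar j - y j) ^ 2) - (∑ j, (x j - y j) ^ 2)
      = (xstar i - y i) ^ 2 - (y i) ^ 2 := by
    rw [← Finset.sum_sub_distrib, Finset.sum_eq_single i]
    · rw [hxj]; simp
    · intro j _ hj
      rw [hxj]; simp [hj]
    · simp
  have hnorm : ‖x‖ ≤ ‖xstar‖ := by
    have h1 : ‖x‖ ^ 2 ≤ ‖xstar‖ ^ 2 := by
      rw [eucl_norm_sq_eq, eucl_norm_sq_eq]
      apply Finset.sum_le_sum
      intro j _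
      rw [hxj]
      split
      · simpa using sq_nonneg (xstar j)
      · exact le_refl _
    nlinarith [norm_nonneg x, norm_nonneg xstar]
  rw [hA, hB] at key
  have hxi := hxnn i
  nlinarith [key, hdiff, hnorm, hlam, hyi, hxi]
end

section
/- Let E be a real Hilbert space, let f : E → ℝ be a convex differentiable function whose gradient is Lipschitz continuous with constant Lf > 0, and let g : E → ℝ be a convex function. Fix x ∈ E, let L ≥ Lf, and suppose x⁺ minimizes over E the function u ↦ ⟨∇f(x), u − x⟩ + (L/2)‖u − x‖² + g(u). Then f(x) + g(x) − f(x⁺) − g(x⁺) ≥ (L/2)‖x⁺ − x‖². -/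
open scoped RealInnerProductSpace

theorem descent_lemma' {E : Type*} [NormedAddCommGroup E] [InnerProductSpace ℝ E] [CompleteSpace E]
    (f : E → ℝ) (f' : E → E) (Lf : ℝ) (hLf : 0 < Lf)
    (hgrad : ∀ x, HasGradientAt f (f' x) x)
    (hlip : LipschitzWith (Real.toNNReal Lf) f') (x y : E) :
    f y ≤ f x + ⟪f' x, y - x⟫ + (Lf / 2) * ‖y - x‖ ^ 2 := by
  set d := y - x with hd
  have hγ : ∀ t : ℝ, HasDerivAt (fun t : ℝ => f (x + t • d)) ⟪f' (x + t • d), d⟫ t := by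
    intro t
    have h1 : HasDerivAt (fun t : ℝ => x + t • d) d t := by
      simpa using ((hasDerivAt_id t).smul_const d).const_add x
    have h2 := (hgrad (x + t • d)).hasFDerivAt
    have h3 := h2.comp_hasDerivAt t h1
    simp at h3
    exact h3
  have hcont : Continuous fun t : ℝ => ⟪f' (x + t • d), d⟫ :=
    (hlip.continuous.comp (by continuity)).inner continuous_const
  have hint : IntervalIntegrable (fun t : ℝ => ⟪f' (x + t • d), d⟫) MeasureTheory.volume 0 1 :=
    hcont.intervalIntegrable 0 1
  have hftc : ∫ t in (0:ℝ)..1, ⟪f' (x + t • d), d⟫ = f (x + (1:ℝ) • d) - f (x + (0:ℝ) • d) :=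
    intervalIntegral.integral_eq_sub_of_hasDerivAt (fun t _ => hγ t) hint
  have hy : x + (1:ℝ) • d = y := by simp [hd]
  have hx0 : x + (0:ℝ) • d = x := by simp
  rw [hy, hx0] at hftc
  have hmono : ∫ t in (0:ℝ)..1, ⟪f' (x + t • d), d⟫ ≤
      ∫ t in (0:ℝ)..1, (⟪f' x, d⟫ + Lf * t * ‖d‖ ^ 2) := by
    apply intervalIntegral.integral_mono_on (by norm_num) hint
    · exact (Continuous.intervalIntegrable (by continuity) 0 1)
    · intro t ht
      have h1 : ⟪f' (x + t • d) - f' x, d⟫ ≤ ‖f' (x + t • d) - f' x‖ * ‖d‖ :=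
        real_inner_le_norm _ _
      have h2 : ‖f' (x + t • d) - f' x‖ ≤ Lf * (t * ‖d‖) := by
        have := hlip.dist_le_mul (x + t • d) x
        rw [Real.coe_toNNReal _ hLf.le] at this
        simpa [dist_eq_norm, norm_smul, abs_of_nonneg ht.1, mul_assoc] using this
      have hinner : ⟪f' (x + t • d), d⟫ = ⟪f' x, d⟫ + ⟪f' (x + t • d) - f' x, d⟫ := by
        rw [inner_sub_left]; ring
      rw [hinner]
      have : ⟪f' (x + t • d) - f' x, d⟫ ≤ Lf * t * ‖d‖ ^ 2 := by
        calc ⟪f' (x + t • d) - f' x, d⟫ ≤ ‖f' (x + t • d) - f' x‖ * ‖d‖ := h1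
          _ ≤ Lf * (t * ‖d‖) * ‖d‖ := by
              apply mul_le_mul_of_nonneg_right h2 (norm_nonneg _)
          _ = Lf * t * ‖d‖ ^ 2 := by ring
      linarith
  have hval : ∫ t in (0:ℝ)..1, (⟪f' x, d⟫ + Lf * t * ‖d‖ ^ 2) =
      ⟪f' x, d⟫ + (Lf / 2) * ‖d‖ ^ 2 := by
    rw [intervalIntegral.integral_add (by apply Continuous.intervalIntegrable; continuity)
      (by apply Continuous.intervalIntegrable; continuity)]
    have h3 : ∫ t in (0:ℝ)..1, Lf * t * ‖d‖ ^ 2 = (Lf / 2) * ‖d‖ ^ 2 := by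
      have : (fun t : ℝ => Lf * t * ‖d‖ ^ 2) = fun t : ℝ => (Lf * ‖d‖ ^ 2) * t := by
        funext t; ring
      rw [this, intervalIntegral.integral_const_mul, integral_id]
      ring
    simp [h3]
  linarith [hftc, hmono, hval]

/-- sufficient decrease of a proximal–linearized update. If `f` is
convex and differentiable with `Lf`-Lipschitz gradient, `g` is convex, `L ≥ Lf`,
and `x⁺` minimizes `u ↦ ⟨∇f(x), u − x⟩ + (L/2)‖u − x‖² + g(u)`, then
`f(x) + g(x) − f(x⁺) − g(x⁺) ≥ (L/2)‖x⁺ − x‖²`. -/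
theorem prox_linearized_sufficient_decrease
    {E : Type*} [NormedAddCommGroup E] [InnerProductSpace ℝ E] [CompleteSpace E]
    (f g : E → ℝ) (f' : E → E) (Lf : ℝ) (hLf : 0 < Lf)
    (hfconv : ConvexOn ℝ Set.univ f) (hgconv : ConvexOn ℝ Set.univ g)
    (hgrad : ∀ x, HasGradientAt f (f' x) x)
    (hlip : LipschitzWith (Real.toNNReal Lf) f')
    (x : E) (L : ℝ) (hL : Lf ≤ L) (xplus : E)
    (hmin : ∀ u : E,
      ⟪f' x, xplus - x⟫ + (L / 2) * ‖xplus - x‖ ^ 2 + g xplus ≤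
        ⟪f' x, u - x⟫ + (L / 2) * ‖u - x‖ ^ 2 + g u) :
    f x + g x - f xplus - g xplus ≥ (L / 2) * ‖xplus - x‖ ^ 2 := by
  set A : ℝ := ‖xplus - x‖ ^ 2 with hA
  set P : ℝ := ⟪f' x, xplus - x⟫ with hP
  have hA0 : 0 ≤ A := by positivity
  -- descent lemma
  have hdesc : f xplus ≤ f x + P + (L / 2) * A := by
    have := descent_lemma' f f' Lf hLf hgrad hlip x xplus
    nlinarith
  -- strong convexity of the prox objective
  have hkey : ∀ t : ℝ, t ∈ Set.Ioc (0:ℝ) 1 →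
      P + g xplus - g x ≤ (L / 2) * A * (t - 2) := by
    intro t ht
    have ht0 := ht.1
    have ht1 := ht.2
    set u : E := xplus + t • (x - xplus) with hu
    have hux : u - x = (1 - t) • (xplus - x) := by
      rw [hu]; module
    have hnu : ‖u - x‖ ^ 2 = (1 - t) ^ 2 * A := by
      rw [hux, norm_smul]
      rw [hA]
      rw [Real.norm_eq_abs]
      rw [mul_pow, sq_abs]
    have hiu : ⟪f' x, u - x⟫ = (1 - t) * P := by
      rw [hux, real_inner_smul_right, hP]
    have hgu : g u ≤ (1 - t) * g xplus + t * g x := by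
      have := hgconv.2 (Set.mem_univ xplus) (Set.mem_univ x)
        (by linarith : (0:ℝ) ≤ 1 - t) ht0.le (by ring : (1 - t) + t = 1)
      have he : (1 - t) • xplus + t • x = u := by rw [hu]; module
      rw [he] at this
      simpa using this
    have := hmin u
    rw [hnu, hiu] at this
    nlinarith
  have hlim : P + g xplus - g x ≤ -(L * A) := by
    have htend : Filter.Tendsto (fun t : ℝ => (L / 2) * A * (t - 2)) (nhdsWithin 0 (Set.Ioi 0))
        (nhds ((L / 2) * A * ((0:ℝ) - 2))) := by
      apply Filter.Tendsto.mono_left _ nhdsWithin_le_nhds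
      exact (Filter.tendsto_id.sub_const 2).const_mul _
    have heq : (L / 2) * A * ((0:ℝ) - 2) = -(L * A) := by ring
    rw [heq] at htend
    refine ge_of_tendsto htend ?_
    filter_upwards [Ioc_mem_nhdsGT_of_mem (Set.left_mem_Ico.2 one_pos)] with t ht
    exact hkey t ht
  linarith
end

section
/- Under the same setup as the subsequence convergence theorem — X ∈ ℝ^{n×d}, L ∈ ℝ^{n×n} symmetric positive semidefinite, μ > 0 with Xᵀ L X ≠ 0, β > 0, f(W,H) = (1/2)‖X − X W H‖_F² + (μ/2)Tr(Wᵀ Xᵀ L X W), g_β(W) = β·Σ_i ‖W_{i·}‖₂, and sequences (W^k, H^k) with W^k ≥ 0 satisfying, for all k: W^{k+1} minimizes over W ≥ 0 the map W ↦ Tr(G_kᵀ(W − W^k)) + (L_w^k/2)‖W − W^k‖_F² + g_β(W) with G_k = Xᵀ(X W^k H^k − X)(H^k)ᵀ + μ Xᵀ L X W^k and L_w^k = ‖H^k(H^k)ᵀ‖₂‖XᵀX‖₂ + μ‖Xᵀ L X‖₂, and H^{k+1} minimizes H ↦ f(W^{k+1}, H) — the following hold: (a) Σ_{k=0}^∞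 [ (L_μ/2)‖W^{k+1} − W^k‖_F² + (1/2)‖X W^{k+1} H^k − X W^{k+1} H^{k+1}‖_F² ] ≤ f(W⁰,H⁰) + g_β(W⁰), where L_μ = μ‖Xᵀ L X‖₂ > 0; (b) W^{k+1} − W^k → 0 as k → ∞; and (c) (X W^k)ᵀ(X W^k H^k − X) → 0 as k → ∞. -/
open scoped BigOperators
open Matrix Filter Topology

set_option maxHeartbeats 1000000

/-- Squared Frobenius norm of a matrix. -/
noncomputable def frobSq {m p : Type*} [Fintype m] [Fintype p]
    (A : Matrix m p ℝ) : ℝ :=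
  ∑ i, ∑ j, (A i j) ^ 2

/-- Frobenius norm of a matrix. -/
noncomputable def frobNorm {m p : Type*} [Fintype m] [Fintype p]
    (A : Matrix m p ℝ) : ℝ :=
  Real.sqrt (frobSq A)

/-- Spectral norm (largest singular value) of a matrix: its operator norm as a
linear map between Euclidean spaces. -/
noncomputable def specNorm {m p : ℕ} (A : Matrix (Fin m) (Fin p) ℝ) : ℝ :=
  ‖LinearMap.toContinuousLinearMap (Matrix.toEuclideanLin A)‖

/-- The smooth part of the GLoSS objective:
`f(W,H) = (1/2)‖X − XWH‖_F² + (μ/2)Tr(WᵀXᵀLXW)`. -/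
noncomputable def fobj {n d K : ℕ} (X : Matrix (Fin n) (Fin d) ℝ)
    (L : Matrix (Fin n) (Fin n) ℝ) (μ : ℝ)
    (W : Matrix (Fin d) (Fin K) ℝ) (H : Matrix (Fin K) (Fin d) ℝ) : ℝ :=
  (1 / 2) * frobSq (X - X * W * H) + (μ / 2) * Matrix.trace (Wᵀ * Xᵀ * L * X * W)

/-- The group-lasso regularizer `g_β(W) = β Σᵢ ‖Wᵢ·‖₂` (sum of Euclidean norms of rows). -/
noncomputable def gbeta {d K : ℕ} (β : ℝ) (W : Matrix (Fin d) (Fin K) ℝ) : ℝ :=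
  β * ∑ i, Real.sqrt (∑ j, (W i j) ^ 2)

/-- The partial gradient `∇_W f(W,H) = Xᵀ(XWH − X)Hᵀ + μXᵀLXW`. -/
noncomputable def Gmat {n d K : ℕ} (X : Matrix (Fin n) (Fin d) ℝ)
    (L : Matrix (Fin n) (Fin n) ℝ) (μ : ℝ)
    (W : Matrix (Fin d) (Fin K) ℝ) (H : Matrix (Fin K) (Fin d) ℝ) :
    Matrix (Fin d) (Fin K) ℝ :=
  Xᵀ * (X * W * H - X) * Hᵀ + μ • (Xᵀ * L * X * W)

/-- The Lipschitz constant `L_w = ‖HHᵀ‖₂‖XᵀX‖₂ + μ‖XᵀLX‖₂`. -/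
noncomputable def Lw {n d K : ℕ} (X : Matrix (Fin n) (Fin d) ℝ)
    (L : Matrix (Fin n) (Fin n) ℝ) (μ : ℝ) (H : Matrix (Fin K) (Fin d) ℝ) : ℝ :=
  specNorm (H * Hᵀ) * specNorm (Xᵀ * X) + μ * specNorm (Xᵀ * L * X)

/-- The prox-linearized surrogate minimized at each `W`-update:
`W' ↦ ⟨∇_W f(Wk,Hk), W' − Wk⟩ + (L_w/2)‖W' − Wk‖_F² + g_β(W')`. -/
noncomputable def Qsurr {n d K : ℕ} (X : Matrix (Fin n) (Fin d) ℝ)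
    (L : Matrix (Fin n) (Fin n) ℝ) (μ β : ℝ)
    (Wk : Matrix (Fin d) (Fin K) ℝ) (Hk : Matrix (Fin K) (Fin d) ℝ)
    (W' : Matrix (Fin d) (Fin K) ℝ) : ℝ :=
  Matrix.trace ((Gmat X L μ Wk Hk)ᵀ * (W' - Wk)) +
    (Lw X L μ Hk / 2) * frobSq (W' - Wk) + gbeta β W'

/-! ### Auxiliary lemmas -/

def ip {m p : Type*} [Fintype m] [Fintype p] (A B : Matrix m p ℝ) : ℝ :=
  ∑ i, ∑ j, A i j * B i j

lemma specNorm_nonneg' {m p : ℕ} (A : Matrix (Fin m) (Fin p) ℝ) : 0 ≤ specNorm A :=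
  norm_nonneg _

lemma specNorm_pos' {m p : ℕ} {A : Matrix (Fin m) (Fin p) ℝ} (hA : A ≠ 0) :
    0 < specNorm A := by
  rw [specNorm, norm_pos_iff]
  intro h
  apply hA
  have h2 : Matrix.toEuclideanLin A = 0 := by
    ext v : 1
    have : (LinearMap.toContinuousLinearMap (Matrix.toEuclideanLin A)) v = 0 := by
      rw [h]; rfl
    simpa using this
  exact (map_eq_zero_iff _ (Matrix.toEuclideanLin (𝕜 := ℝ)).injective).mp h2

lemma quad_col_le' {p : ℕ} (M : Matrix (Fin p) (Fin p) ℝ) (v : EuclideanSpace ℝ (Fin p)) :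
    ∑ i, v i * (M.mulVec v) i ≤ specNorm M * ∑ i, (v i) ^ 2 := by
  set T := LinearMap.toContinuousLinearMap (Matrix.toEuclideanLin M) with hT
  have hTv : ∀ i, (T v) i = (M.mulVec v) i := fun i => rfl
  have h1 : ∑ i, v i * (M.mulVec v) i = inner (𝕜 := ℝ) v (T v) := by
    rw [PiLp.inner_apply]
    simp [hTv, RCLike.inner_apply]
    exact Finset.sum_congr rfl fun i _ => mul_comm _ _
  have h4 : ‖v‖ ^ 2 = ∑ i, (v i) ^ 2 := by
    rw [EuclideanSpace.norm_eq, Real.sq_sqrt (by positivity)]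
    simp [sq_abs]
  have hs : specNorm M = ‖T‖ := rfl
  calc ∑ i, v i * (M.mulVec v) i ≤ ‖v‖ * ‖T v‖ := h1 ▸ real_inner_le_norm _ _
    _ ≤ ‖T‖ * ‖v‖ ^ 2 := by nlinarith [norm_nonneg v, norm_nonneg (T v), T.le_opNorm v]
    _ = specNorm M * ∑ i, (v i) ^ 2 := by rw [h4, hs]

lemma trace_tm {m p : Type*} [Fintype m] [Fintype p] (A B : Matrix m p ℝ) :
    Matrix.trace (Aᵀ * B) = ip A B := by
  rw [Matrix.trace, ip, Finset.sum_comm]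
  simp [Matrix.diag, Matrix.mul_apply, Matrix.transpose_apply]

lemma frobSq_nonneg {m p : Type*} [Fintype m] [Fintype p] (A : Matrix m p ℝ) :
    0 ≤ frobSq A := by
  apply Finset.sum_nonneg; intro i _; apply Finset.sum_nonneg; intro j _; positivity

lemma quad_trace_le {p q : ℕ} (M : Matrix (Fin p) (Fin p) ℝ)
    (D : Matrix (Fin p) (Fin q) ℝ) :
    Matrix.trace (Dᵀ * M * D) ≤ specNorm M * frobSq D := by
  have key : Matrix.trace (Dᵀ * M * D) = ∑ j, ∑ i, D i j * ((M * D) i j) := by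
    rw [Matrix.mul_assoc, trace_tm, ip, Finset.sum_comm]
  rw [key]
  have frs : frobSq D = ∑ j, ∑ i, (D i j) ^ 2 := Finset.sum_comm
  rw [frs, Finset.mul_sum]
  apply Finset.sum_le_sum
  intro j _
  have := quad_col_le' M ((WithLp.equiv 2 _).symm (fun i => D i j))
  simpa [Matrix.mul_apply, Matrix.mulVec, dotProduct] using this

lemma quad_trace_nonneg {p q : ℕ} {M : Matrix (Fin p) (Fin p) ℝ} (hM : M.PosSemidef)
    (D : Matrix (Fin p) (Fin q) ℝ) :
    0 ≤ Matrix.trace (Dᵀ * M * D) := by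
  have key : Matrix.trace (Dᵀ * M * D) = ∑ j, ∑ i, D i j * ((M * D) i j) := by
    rw [Matrix.mul_assoc, trace_tm, ip, Finset.sum_comm]
  rw [key]
  apply Finset.sum_nonneg
  intro j _
  have := hM.dotProduct_mulVec_nonneg (fun i => D i j)
  simpa [dotProduct, Matrix.mulVec, Matrix.mul_apply] using this

lemma ip_comm {m p : Type*} [Fintype m] [Fintype p] (A B : Matrix m p ℝ) :
    ip A B = ip B A := by
  unfold ip; congr 1; ext i; congr 1; ext j; ring

lemma frobSq_eq_ip {m p : Type*} [Fintype m] [Fintype p] (A : Matrix m p ℝ) :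
    frobSq A = ip A A := by
  unfold frobSq ip; congr 1; ext i; congr 1; ext j; ring

lemma frobSq_expand {m p : Type*} [Fintype m] [Fintype p] (A B : Matrix m p ℝ) (t : ℝ) :
    frobSq (A + t • B) = frobSq A + 2 * t * ip A B + t ^ 2 * frobSq B := by
  unfold frobSq ip
  rw [Finset.mul_sum, Finset.mul_sum, ← Finset.sum_add_distrib, ← Finset.sum_add_distrib]
  apply Finset.sum_congr rfl; intro i _
  rw [Finset.mul_sum, Finset.mul_sum, ← Finset.sum_add_distrib, ← Finset.sum_add_distrib]
  apply Finset.sum_congr rfl; intro j _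
  simp [Matrix.add_apply, Matrix.smul_apply]
  ring

lemma frobSq_sub {m p : Type*} [Fintype m] [Fintype p] (A B : Matrix m p ℝ) :
    frobSq (A - B) = frobSq A - 2 * ip A B + frobSq B := by
  have := frobSq_expand A B (-1)
  simp only [neg_one_smul, ← sub_eq_add_neg] at this
  linarith [this]

lemma frobSq_smul {m p : Type*} [Fintype m] [Fintype p] (B : Matrix m p ℝ) (t : ℝ) :
    frobSq (t • B) = t ^ 2 * frobSq B := by
  have := frobSq_expand 0 B t
  simpa [frobSq, ip] using this

lemma frobSq_transpose {m p : Type*} [Fintype m] [Fintype p] (A : Matrix m p ℝ) :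
    frobSq Aᵀ = frobSq A := by
  unfold frobSq
  rw [Finset.sum_comm]
  rfl

lemma ip_smul_right {m p : Type*} [Fintype m] [Fintype p] (A B : Matrix m p ℝ) (t : ℝ) :
    ip A (t • B) = t * ip A B := by
  unfold ip
  rw [Finset.mul_sum]
  refine Finset.sum_congr rfl fun i _ => ?_
  rw [Finset.mul_sum]
  refine Finset.sum_congr rfl fun j _ => ?_
  simp [Matrix.smul_apply]; ring

lemma ip_smul_left' {m p : Type*} [Fintype m] [Fintype p] (A B : Matrix m p ℝ) (t : ℝ) :
    ip (t • A) B = t * ip A B := by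
  rw [ip_comm, ip_smul_right, ip_comm]

lemma ip_neg_left' {m p : Type*} [Fintype m] [Fintype p] (A B : Matrix m p ℝ) :
    ip (-A) B = - ip A B := by
  have := ip_smul_left' A B (-1); simpa using this

lemma ip_add_left {m p : Type*} [Fintype m] [Fintype p] (A B C : Matrix m p ℝ) :
    ip (A + B) C = ip A C + ip B C := by
  unfold ip
  rw [← Finset.sum_add_distrib]
  refine Finset.sum_congr rfl fun i _ => ?_
  rw [← Finset.sum_add_distrib]
  refine Finset.sum_congr rfl fun j _ => ?_
  simp [Matrix.add_apply]; ring

lemma ip_add_right {m p : Type*} [Fintype m] [Fintype p] (A B C : Matrix m p ℝ) :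
    ip A (B + C) = ip A B + ip A C := by
  rw [ip_comm, ip_add_left, ip_comm B, ip_comm C]

lemma ip_zero_left {m p : Type*} [Fintype m] [Fintype p] (B : Matrix m p ℝ) :
    ip 0 B = 0 := by
  simp [ip]

lemma ip_mul_sandwich {m p m' p' : Type*} [Fintype m] [Fintype p] [Fintype m'] [Fintype p']
    (C : Matrix m p ℝ) (P : Matrix m m' ℝ) (Q : Matrix p' p ℝ) (D : Matrix m' p' ℝ) :
    ip C (P * D * Q) = ip (Pᵀ * C * Qᵀ) D := by
  rw [← trace_tm, ← trace_tm]
  rw [Matrix.transpose_mul, Matrix.transpose_mul, Matrix.transpose_transpose,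
    Matrix.transpose_transpose]
  rw [Matrix.mul_assoc Q, ← Matrix.trace_mul_comm (Cᵀ * P * D) Q,
    Matrix.mul_assoc, Matrix.mul_assoc, Matrix.mul_assoc]

lemma ip_mul_left {m p m' : Type*} [Fintype m] [Fintype p] [Fintype m'] [DecidableEq p]
    (C : Matrix m p ℝ) (P : Matrix m m' ℝ) (D : Matrix m' p ℝ) :
    ip C (P * D) = ip (Pᵀ * C) D := by
  have := ip_mul_sandwich C P (1 : Matrix p p ℝ) D
  simpa using this

lemma trace_quadform {n d K : ℕ} (X : Matrix (Fin n) (Fin d) ℝ)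
    (L : Matrix (Fin n) (Fin n) ℝ) (W : Matrix (Fin d) (Fin K) ℝ) :
    Matrix.trace (Wᵀ * Xᵀ * L * X * W) = ip W ((Xᵀ * L * X) * W) := by
  rw [← trace_tm]
  rw [Matrix.mul_assoc Wᵀ, Matrix.mul_assoc Wᵀ, Matrix.mul_assoc Wᵀ,
    Matrix.mul_assoc (Xᵀ), Matrix.mul_assoc (Xᵀ), Matrix.mul_assoc L]

lemma fobj_expand_W {n d K : ℕ} (X : Matrix (Fin n) (Fin d) ℝ)
    (L : Matrix (Fin n) (Fin n) ℝ) (hLsym : Lᵀ = L) (μ : ℝ)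
    (W₀ Δ : Matrix (Fin d) (Fin K) ℝ) (Hk : Matrix (Fin K) (Fin d) ℝ) :
    fobj X L μ (W₀ + Δ) Hk = fobj X L μ W₀ Hk + ip (Gmat X L μ W₀ Hk) Δ
      + (1 / 2) * frobSq (X * Δ * Hk)
      + (μ / 2) * Matrix.trace (Δᵀ * (Xᵀ * L * X) * Δ) := by
  have hMsym : (Xᵀ * L * X)ᵀ = Xᵀ * L * X := by
    simp [Matrix.transpose_mul, Matrix.mul_assoc, hLsym]
  set M := Xᵀ * L * X with hM
  have e1 : X - X * (W₀ + Δ) * Hk = (X - X * W₀ * Hk) - X * Δ * Hk := by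
    rw [Matrix.mul_add, Matrix.add_mul]; abel
  have tq : Matrix.trace (Δᵀ * M * Δ) = ip Δ (M * Δ) := by
    rw [← trace_tm, Matrix.mul_assoc]
  unfold fobj Gmat
  rw [e1, frobSq_sub, trace_quadform, trace_quadform, tq, ← hM]
  have e3 : M * (W₀ + Δ) = M * W₀ + M * Δ := Matrix.mul_add _ _ _
  rw [e3, ip_add_left, ip_add_right, ip_add_right]
  have cross : ip W₀ (M * Δ) = ip (M * W₀) Δ := by
    rw [ip_mul_left, hMsym]
  have cross2 : ip Δ (M * W₀) = ip (M * W₀) Δ := ip_comm _ _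
  have grad1 : ip (X - X * W₀ * Hk) (X * Δ * Hk) = - ip (Xᵀ * (X * W₀ * Hk - X) * Hkᵀ) Δ := by
    rw [ip_mul_sandwich]
    have : Xᵀ * (X - X * W₀ * Hk) * Hkᵀ = -(Xᵀ * (X * W₀ * Hk - X) * Hkᵀ) := by
      rw [Matrix.mul_sub, Matrix.sub_mul, Matrix.mul_sub, Matrix.sub_mul]; abel
    rw [this, ip_neg_left']
  rw [ip_add_left, grad1, ip_smul_left', cross, cross2]
  ring

lemma fobj_expand_H {n d K : ℕ} (X : Matrix (Fin n) (Fin d) ℝ)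
    (L : Matrix (Fin n) (Fin n) ℝ) (μ : ℝ)
    (W : Matrix (Fin d) (Fin K) ℝ) (H₀ E : Matrix (Fin K) (Fin d) ℝ) (t : ℝ) :
    fobj X L μ W (H₀ + t • E) = fobj X L μ W H₀
      + t * ip ((X * W)ᵀ * (X * W * H₀ - X)) E
      + (t ^ 2 / 2) * frobSq (X * W * E) := by
  have e1 : X - X * W * (H₀ + t • E) = (X - X * W * H₀) - t • (X * W * E) := by
    rw [Matrix.mul_add, Matrix.mul_smul]; abel
  unfold fobj
  rw [e1, frobSq_sub, frobSq_smul, ip_smul_right]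
  have grad : ip (X - X * W * H₀) (X * W * E) = - ip ((X * W)ᵀ * (X * W * H₀ - X)) E := by
    rw [ip_mul_left]
    have : (X * W)ᵀ * (X - X * W * H₀) = -((X * W)ᵀ * (X * W * H₀ - X)) := by
      rw [Matrix.mul_sub, Matrix.mul_sub]; abel
    rw [this, ip_neg_left']
  rw [grad]
  ring

lemma eucl_norm_eq {K : ℕ} (u : EuclideanSpace ℝ (Fin K)) :
    ‖u‖ = Real.sqrt (∑ j, (u j) ^ 2) := by
  rw [EuclideanSpace.norm_eq]; simp [Real.norm_eq_abs, sq_abs]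

lemma sqrt_row_convex {K : ℕ} (v w : Fin K → ℝ) {θ : ℝ} (h0 : 0 ≤ θ) (h1 : θ ≤ 1) :
    Real.sqrt (∑ j, ((1 - θ) * v j + θ * w j) ^ 2)
      ≤ (1 - θ) * Real.sqrt (∑ j, (v j) ^ 2) + θ * Real.sqrt (∑ j, (w j) ^ 2) := by
  set v' : EuclideanSpace ℝ (Fin K) := (WithLp.equiv 2 _).symm v with hv
  set w' : EuclideanSpace ℝ (Fin K) := (WithLp.equiv 2 _).symm w with hw
  have key : Real.sqrt (∑ j, ((1 - θ) * v j + θ * w j) ^ 2)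
      = ‖(1 - θ) • v' + θ • w'‖ := by
    rw [eucl_norm_eq]
    congr 1
  calc Real.sqrt (∑ j, ((1 - θ) * v j + θ * w j) ^ 2)
      = ‖(1 - θ) • v' + θ • w'‖ := key
    _ ≤ ‖(1 - θ) • v'‖ + ‖θ • w'‖ := norm_add_le _ _
    _ = (1 - θ) * ‖v'‖ + θ * ‖w'‖ := by
        rw [norm_smul, norm_smul, Real.norm_of_nonneg (by linarith), Real.norm_of_nonneg h0]
    _ = (1 - θ) * Real.sqrt (∑ j, (v j) ^ 2) + θ * Real.sqrt (∑ j, (w j) ^ 2) := by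
        rw [eucl_norm_eq, eucl_norm_eq]; rfl

lemma gbeta_convex {d K : ℕ} {β : ℝ} (hβ : 0 ≤ β) (A B : Matrix (Fin d) (Fin K) ℝ)
    {θ : ℝ} (h0 : 0 ≤ θ) (h1 : θ ≤ 1) :
    gbeta β ((1 - θ) • A + θ • B) ≤ (1 - θ) * gbeta β A + θ * gbeta β B := by
  unfold gbeta
  have : ∑ i, Real.sqrt (∑ j, (((1 - θ) • A + θ • B) i j) ^ 2)
      ≤ ∑ i, ((1 - θ) * Real.sqrt (∑ j, (A i j) ^ 2) + θ * Real.sqrt (∑ j, (B i j) ^ 2)) := by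
    refine Finset.sum_le_sum fun i _ => ?_
    have := sqrt_row_convex (fun j => A i j) (fun j => B i j) h0 h1
    simpa [Matrix.add_apply, Matrix.smul_apply] using this
  rw [Finset.sum_add_distrib, ← Finset.mul_sum, ← Finset.mul_sum] at this
  nlinarith [this]

lemma gbeta_nonneg {d K : ℕ} {β : ℝ} (hβ : 0 ≤ β) (A : Matrix (Fin d) (Fin K) ℝ) :
    0 ≤ gbeta β A := by
  unfold gbeta
  apply mul_nonneg hβ
  exact Finset.sum_nonneg fun i _ => Real.sqrt_nonneg _

lemma frobSq_eq_zero {m p : Type*} [Fintype m] [Fintype p] {A : Matrix m p ℝ}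
    (h : frobSq A = 0) : A = 0 := by
  ext i j
  have h2 := (Finset.sum_eq_zero_iff_of_nonneg (fun i _ => Finset.sum_nonneg
    (fun j _ => sq_nonneg (A i j)))).mp h i (Finset.mem_univ i)
  have h3 := (Finset.sum_eq_zero_iff_of_nonneg (fun j _ => sq_nonneg (A i j))).mp
    h2 j (Finset.mem_univ j)
  simpa using pow_eq_zero_iff (n := 2) (by norm_num) |>.mp h3

lemma tendsto_matrix_of_frobSq {d K : ℕ} (A : ℕ → Matrix (Fin d) (Fin K) ℝ)
    (h : Tendsto (fun k => frobSq (A k)) atTop (𝓝 0)) :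
    Tendsto A atTop (𝓝 (0 : Matrix (Fin d) (Fin K) ℝ)) := by
  have hentry : ∀ i j, Tendsto (fun k => A k i j) atTop (𝓝 0) := by
    intro i j
    rw [tendsto_zero_iff_abs_tendsto_zero]
    have hsq : Tendsto (fun k => (A k i j) ^ 2) atTop (𝓝 0) := by
      apply squeeze_zero (fun k => sq_nonneg _) _ h
      intro k
      calc (A k i j) ^ 2 ≤ ∑ j', (A k i j') ^ 2 :=
            Finset.single_le_sum (f := fun j' => (A k i j') ^ 2)
              (fun j' _ => sq_nonneg _) (Finset.mem_univ j)
        _ ≤ frobSq (A k) :=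
            Finset.single_le_sum (f := fun i' => ∑ j', (A k i' j') ^ 2)
              (fun i' _ => Finset.sum_nonneg fun j' _ => sq_nonneg _) (Finset.mem_univ i)
    have := (Real.continuous_sqrt.tendsto 0).comp hsq
    simpa [Real.sqrt_sq_eq_abs, Function.comp_def] using this
  apply tendsto_pi_nhds.mpr
  intro i
  apply tendsto_pi_nhds.mpr
  intro j
  exact hentry i j

/-- Exact gain at an exact minimizer of the `H`-subproblem. -/
lemma Hstep_lemma {n d K : ℕ} (X : Matrix (Fin n) (Fin d) ℝ)
    (L : Matrix (Fin n) (Fin n) ℝ) (μ : ℝ)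
    (W' : Matrix (Fin d) (Fin K) ℝ) (Hstar : Matrix (Fin K) (Fin d) ℝ)
    (hmin : ∀ H', fobj X L μ W' Hstar ≤ fobj X L μ W' H') :
    (X * W')ᵀ * (X * W' * Hstar - X) = 0 ∧
    ∀ Hk', fobj X L μ W' Hk' = fobj X L μ W' Hstar
      + (1 / 2) * frobSq (X * W' * Hk' - X * W' * Hstar) := by
  set G' := (X * W')ᵀ * (X * W' * Hstar - X) with hGdef
  have hipzero : ∀ E : Matrix (Fin K) (Fin d) ℝ, ip G' E = 0 := by
    intro E
    set a := ip G' E with ha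
    set b := frobSq (X * W' * E) with hb
    have hbnn : 0 ≤ b := frobSq_nonneg _
    have h1 : ∀ t : ℝ, 0 ≤ t * a + (t ^ 2 / 2) * b := by
      intro t
      have := hmin (Hstar + t • E)
      rw [fobj_expand_H] at this
      linarith
    have habs : |a| ≤ 0 := by
      apply le_of_forall_pos_le_add
      intro ε hε
      have hbpos : (0:ℝ) < b + 1 := by linarith
      set s := 2 * ε / (b + 1) with hs
      have hspos : 0 < s := by positivity
      have hsb : s * (b + 1) = 2 * ε := by rw [hs]; field_simp
      have hp := h1 s
      have hm := h1 (-s)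
      have h6 : 0 ≤ s * (a + (s / 2) * b) := by nlinarith [hp]
      have h6' : 0 ≤ s * (-a + (s / 2) * b) := by nlinarith [hm]
      have h7 : 0 ≤ a + (s / 2) * b := by
        by_contra hco; push_neg at hco
        nlinarith [mul_neg_of_pos_of_neg hspos hco]
      have h7' : 0 ≤ -a + (s / 2) * b := by
        by_contra hco; push_neg at hco
        nlinarith [mul_neg_of_pos_of_neg hspos hco]
      have h8 : (s / 2) * b ≤ ε := by nlinarith [hsb, hspos]
      rw [abs_le]
      constructor <;> [linarith; linarith]
    have : a = 0 := abs_eq_zero.mp (le_antisymm habs (abs_nonneg a))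
    exact this
  have hGzero : G' = 0 := by
    apply frobSq_eq_zero
    rw [frobSq_eq_ip]
    exact hipzero G'
  refine ⟨hGzero, fun Hk' => ?_⟩
  have := fobj_expand_H X L μ W' Hstar (Hk' - Hstar) 1
  rw [one_smul] at this
  have e : Hstar + (Hk' - Hstar) = Hk' := by abel
  rw [e] at this
  rw [this, hipzero, ← Matrix.mul_sub]
  ring


/-- along the GLoSS block coordinate descent iterations (without
extrapolation), with `L_μ = μ‖XᵀLX‖₂ > 0`:
(a) `Σ_k [(L_μ/2)‖W^{k+1} − W^k‖_F² + (1/2)‖XW^{k+1}H^k − XW^{k+1}H^{k+1}‖_F²]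
    ≤ f(W⁰,H⁰) + g_β(W⁰)` (all partial sums of the nonnegative series are so bounded);
(b) `W^{k+1} − W^k → 0`; and (c) `(XW^k)ᵀ(XW^kH^k − X) → 0`. -/
theorem gloss_summability_and_limits (n d K : ℕ)
    (X : Matrix (Fin n) (Fin d) ℝ) (L : Matrix (Fin n) (Fin n) ℝ)
    (hL : L.PosSemidef) (μ : ℝ) (hμ : 0 < μ) (hXLX : Xᵀ * L * X ≠ 0)
    (β : ℝ) (hβ : 0 < β)
    (W : ℕ → Matrix (Fin d) (Fin K) ℝ) (H : ℕ → Matrix (Fin K) (Fin d) ℝ)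
    (hWnn : ∀ k, ∀ i j, 0 ≤ W k i j)
    (hWmin : ∀ k, ∀ W' : Matrix (Fin d) (Fin K) ℝ, (∀ i j, 0 ≤ W' i j) →
      Qsurr X L μ β (W k) (H k) (W (k + 1)) ≤ Qsurr X L μ β (W k) (H k) W')
    (hHmin : ∀ k, ∀ H' : Matrix (Fin K) (Fin d) ℝ,
      fobj X L μ (W (k + 1)) (H (k + 1)) ≤ fobj X L μ (W (k + 1)) H')
    (Lmu : ℝ) (hLmu : Lmu = μ * specNorm (Xᵀ * L * X)) :
    0 < Lmu ∧
    (∀ N : ℕ, ∑ k ∈ Finset.range N,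
        ((Lmu / 2) * frobSq (W (k + 1) - W k) +
          (1 / 2) * frobSq (X * W (k + 1) * H k - X * W (k + 1) * H (k + 1))) ≤
      fobj X L μ (W 0) (H 0) + gbeta β (W 0)) ∧
    Tendsto (fun k => W (k + 1) - W k) atTop (𝓝 0) ∧
    Tendsto (fun k => (X * W k)ᵀ * (X * W k * H k - X)) atTop (𝓝 0) := by
  have hLsym : Lᵀ = L := by
    ext i j
    have := congrFun (congrFun hL.1 i) j
    simpa [Matrix.conjTranspose_apply] using this
  have hLmupos : 0 < Lmu := hLmu ▸ mul_pos hμ (specNorm_pos' hXLX)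
  -- the potential function
  set F : ℕ → ℝ := fun k => fobj X L μ (W k) (H k) + gbeta β (W k) with hF
  set a : ℕ → ℝ := fun k => (Lmu / 2) * frobSq (W (k + 1) - W k) +
      (1 / 2) * frobSq (X * W (k + 1) * H k - X * W (k + 1) * H (k + 1)) with haDef
  have hannn : ∀ k, 0 ≤ a k := by
    intro k
    have := frobSq_nonneg (W (k + 1) - W k)
    have := frobSq_nonneg (X * W (k + 1) * H k - X * W (k + 1) * H (k + 1))
    unfold a
    nlinarith [hLmupos]
  have hFnonneg : ∀ k, 0 ≤ F k := by
    intro k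
    have h1 : 0 ≤ frobSq (X - X * W k * H k) := frobSq_nonneg _
    have h2 : 0 ≤ Matrix.trace ((W k)ᵀ * Xᵀ * L * X * (W k)) := by
      have heq : (W k)ᵀ * Xᵀ * L * X * (W k) = (X * W k)ᵀ * L * (X * W k) := by
        simp only [Matrix.transpose_mul, Matrix.mul_assoc]
      rw [heq]
      exact quad_trace_nonneg hL (X * W k)
    have h3 : 0 ≤ gbeta β (W k) := gbeta_nonneg hβ.le _
    unfold F
    unfold fobj
    nlinarith [hμ]
  -- W-step descent
  have hWdescent : ∀ k, fobj X L μ (W (k + 1)) (H k) + gbeta β (W (k + 1)) ≤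
      fobj X L μ (W k) (H k) + gbeta β (W k) - (Lmu / 2) * frobSq (W (k + 1) - W k) := by
    intro k
    set Δ := W (k + 1) - W k with hΔ
    set Gk := Gmat X L μ (W k) (H k) with hGk
    set c := Lw X L μ (H k) with hc
    have hcnn : 0 ≤ c := by
      unfold c
      unfold Lw
      have := specNorm_nonneg' (H k * (H k)ᵀ)
      have := specNorm_nonneg' (Xᵀ * X)
      have := specNorm_nonneg' (Xᵀ * L * X)
      nlinarith [hμ]
    have qrw : ∀ V : Matrix (Fin d) (Fin K) ℝ, Qsurr X L μ β (W k) (H k) V =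
        ip Gk (V - W k) + (c / 2) * frobSq (V - W k) + gbeta β V := by
      intro V
      rw [Qsurr, trace_tm]
    -- key inequality (*)
    have hkey : ip Gk Δ + c * frobSq Δ + gbeta β (W (k + 1)) ≤ gbeta β (W k) := by
      apply le_of_forall_pos_le_add
      intro ε hε
      set s := frobSq Δ with hsDef
      have hsnn : 0 ≤ s := frobSq_nonneg _
      set q := (c / 2) * s with hq
      have hqnn : 0 ≤ q := by positivity
      set θ := min 1 (ε / (q + 1)) with hθDef
      have hθpos : 0 < θ := lt_min one_pos (by positivity)
      have hθ1 : θ ≤ 1 := min_le_left _ _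
      have hθε : θ * (q + 1) ≤ ε := by
        have h := min_le_right 1 (ε / (q + 1))
        calc θ * (q + 1) ≤ (ε / (q + 1)) * (q + 1) := by
              apply mul_le_mul_of_nonneg_right h (by linarith)
          _ = ε := by field_simp
      set Wθ := (1 - θ) • W (k + 1) + θ • W k with hWθ
      have hWθnn : ∀ i j, 0 ≤ Wθ i j := by
        intro i j
        have h1 := hWnn (k + 1) i j
        have h2 := hWnn k i j
        have : Wθ i j = (1 - θ) * W (k + 1) i j + θ * W k i j := by
          simp [hWθ, Matrix.add_apply, Matrix.smul_apply]
        rw [this]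
        have : 0 ≤ 1 - θ := by linarith
        positivity
      have hQle := hWmin k Wθ hWθnn
      rw [qrw, qrw] at hQle
      have hWθsub : Wθ - W k = (1 - θ) • Δ := by
        unfold Wθ Δ
        ext i j
        simp [Matrix.add_apply, Matrix.sub_apply, Matrix.smul_apply]
        ring
      rw [hWθsub, frobSq_smul, ip_smul_right] at hQle
      have hgconv : gbeta β Wθ ≤ (1 - θ) * gbeta β (W (k + 1)) + θ * gbeta β (W k) :=
        gbeta_convex hβ.le _ _ hθpos.le hθ1
      -- divide by θ
      have hdiv : ip Gk Δ + (c / 2) * (2 - θ) * s + gbeta β (W (k + 1)) ≤ gbeta β (W k) := by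
        by_contra hcon
        push_neg at hcon
        nlinarith [hQle, hgconv, mul_lt_mul_of_pos_left hcon hθpos]
      have hqθ : (c / 2) * θ * s ≤ ε := by
        have he1 : θ * (q + 1) = θ * q + θ := by ring
        have he2 : (c / 2) * θ * s = θ * q := by rw [hq]; ring
        linarith [hθε, hθpos]
      have hringy : (c / 2) * (2 - θ) * s = c * s - (c / 2) * θ * s := by ring
      linarith [hdiv, hqθ]
    -- smoothness bound
    have hexp := fobj_expand_W X L hLsym μ (W k) Δ (H k)
    have hWk1 : W k + Δ = W (k + 1) := by unfold Δ; abel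
    rw [hWk1] at hexp
    have hb2 : Matrix.trace (Δᵀ * (Xᵀ * L * X) * Δ) ≤ specNorm (Xᵀ * L * X) * frobSq Δ :=
      quad_trace_le _ _
    have hb1 : frobSq (X * Δ * H k) ≤
        specNorm (H k * (H k)ᵀ) * specNorm (Xᵀ * X) * frobSq Δ := by
      have step1 : frobSq (X * Δ * H k) ≤ specNorm (H k * (H k)ᵀ) * frobSq (X * Δ) := by
        have heq : frobSq (X * Δ * H k) =
            Matrix.trace (((X * Δ)ᵀ)ᵀ * (H k * (H k)ᵀ) * (X * Δ)ᵀ) := by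
          rw [frobSq_eq_ip, ← trace_tm]
          rw [Matrix.transpose_transpose]
          rw [Matrix.transpose_mul]
          rw [Matrix.trace_mul_comm]
          rw [← Matrix.mul_assoc, ← Matrix.mul_assoc, Matrix.mul_assoc (X * Δ)]
        rw [heq]
        calc Matrix.trace (((X * Δ)ᵀ)ᵀ * (H k * (H k)ᵀ) * (X * Δ)ᵀ)
            ≤ specNorm (H k * (H k)ᵀ) * frobSq (X * Δ)ᵀ := quad_trace_le _ _
          _ = specNorm (H k * (H k)ᵀ) * frobSq (X * Δ) := by rw [frobSq_transpose]
      have step2 : frobSq (X * Δ) ≤ specNorm (Xᵀ * X) * frobSq Δ := by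
        have heq : frobSq (X * Δ) = Matrix.trace (Δᵀ * (Xᵀ * X) * Δ) := by
          rw [frobSq_eq_ip, ← trace_tm, Matrix.transpose_mul, Matrix.mul_assoc,
            ← Matrix.mul_assoc Xᵀ, ← Matrix.mul_assoc Δᵀ]
        rw [heq]
        exact quad_trace_le _ _
      calc frobSq (X * Δ * H k) ≤ specNorm (H k * (H k)ᵀ) * frobSq (X * Δ) := step1
        _ ≤ specNorm (H k * (H k)ᵀ) * (specNorm (Xᵀ * X) * frobSq Δ) :=
            mul_le_mul_of_nonneg_left step2 (specNorm_nonneg' _)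
        _ = specNorm (H k * (H k)ᵀ) * specNorm (Xᵀ * X) * frobSq Δ := by ring
    have hcLmu : Lmu ≤ c := by
      unfold c
      unfold Lw
      rw [hLmu]
      nlinarith [specNorm_nonneg' (H k * (H k)ᵀ), specNorm_nonneg' (Xᵀ * X)]
    have hcval : c = specNorm (H k * (H k)ᵀ) * specNorm (Xᵀ * X) + μ * specNorm (Xᵀ * L * X) := by
      unfold c; rfl
    have hsnn : 0 ≤ frobSq Δ := frobSq_nonneg Δ
    have hb2' : (μ / 2) * Matrix.trace (Δᵀ * (Xᵀ * L * X) * Δ) ≤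
        (μ / 2) * (specNorm (Xᵀ * L * X) * frobSq Δ) :=
      mul_le_mul_of_nonneg_left hb2 (by positivity)
    have hb1' : (1 / 2) * frobSq (X * Δ * H k) ≤
        (1 / 2) * (specNorm (H k * (H k)ᵀ) * specNorm (Xᵀ * X) * frobSq Δ) :=
      mul_le_mul_of_nonneg_left hb1 (by norm_num)
    have hAnn : 0 ≤ specNorm (H k * (H k)ᵀ) * specNorm (Xᵀ * X) * frobSq Δ := by
      have := specNorm_nonneg' (H k * (H k)ᵀ)
      have := specNorm_nonneg' (Xᵀ * X)
      positivity
    have hcs : c * frobSq Δ = specNorm (H k * (H k)ᵀ) * specNorm (Xᵀ * X) * frobSq Δ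
        + μ * specNorm (Xᵀ * L * X) * frobSq Δ := by rw [hcval]; ring
    have hLs : (Lmu / 2) * frobSq Δ = (μ / 2) * (specNorm (Xᵀ * L * X) * frobSq Δ) := by
      rw [hLmu]; ring
    linarith [hexp, hkey, hb1', hb2', hAnn]
  -- one-step decrease of F
  have hstep : ∀ k, a k + F (k + 1) ≤ F k := by
    intro k
    have hW := hWdescent k
    obtain ⟨-, hHgain⟩ := Hstep_lemma X L μ (W (k + 1)) (H (k + 1)) (hHmin k)
    have := hHgain (H k)
    unfold a F
    have hsub : X * W (k + 1) * H k - X * W (k + 1) * H (k + 1) =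
        X * W (k + 1) * H k - X * W (k + 1) * H (k + 1) := rfl
    linarith [hW, this]
  -- part (a)
  have parta : ∀ N : ℕ, ∑ k ∈ Finset.range N, a k ≤ F 0 := by
    intro N
    have h1 : ∑ k ∈ Finset.range N, a k ≤ ∑ k ∈ Finset.range N, (F k - F (k + 1)) :=
      Finset.sum_le_sum fun k _ => by linarith [hstep k]
    have h2 : ∑ k ∈ Finset.range N, (F k - F (k + 1)) = F 0 - F N :=
      Finset.sum_range_sub' F N
    linarith [hFnonneg N]
  -- part (b)
  have hsummable : Summable a := summable_of_sum_range_le hannn parta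
  have ha0 : Tendsto a atTop (𝓝 0) := hsummable.tendsto_atTop_zero
  have hfrob : Tendsto (fun k => frobSq (W (k + 1) - W k)) atTop (𝓝 0) := by
    apply squeeze_zero (fun k => frobSq_nonneg _) (g := fun k => (2 / Lmu) * a k)
    · intro k
      have h1 : (Lmu / 2) * frobSq (W (k + 1) - W k) ≤ a k := by
        unfold a
        nlinarith [frobSq_nonneg (X * W (k + 1) * H k - X * W (k + 1) * H (k + 1))]
      have h2 : frobSq (W (k + 1) - W k) = (2 / Lmu) * ((Lmu / 2) * frobSq (W (k + 1) - W k)) := by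
        field_simp
      rw [h2]
      apply mul_le_mul_of_nonneg_left h1 (by positivity)
    · simpa only [mul_zero] using ha0.const_mul (2 / Lmu)
  have partb : Tendsto (fun k => W (k + 1) - W k) atTop (𝓝 0) :=
    tendsto_matrix_of_frobSq _ hfrob
  -- part (c)
  have partc : Tendsto (fun k => (X * W k)ᵀ * (X * W k * H k - X)) atTop (𝓝 0) := by
    have hev : (fun _ : ℕ => (0 : Matrix (Fin K) (Fin d) ℝ)) =ᶠ[atTop]
        (fun k => (X * W k)ᵀ * (X * W k * H k - X)) := by
      rw [Filter.eventuallyEq_iff_exists_mem]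
      refine ⟨Set.Ici 1, Filter.Ici_mem_atTop 1, fun k hk => ?_⟩
      obtain ⟨m, rfl⟩ := Nat.exists_eq_add_of_le (hk : 1 ≤ k)
      obtain ⟨hz, -⟩ := Hstep_lemma X L μ (W (1 + m)) (H (1 + m)) (by
        have := hHmin m
        simpa [Nat.add_comm 1 m] using this)
      simp only
      rw [hz]
    exact Tendsto.congr' hev tendsto_const_nhds
  exact ⟨hLmupos, fun N => by simpa [haDef, hF] using parta N, partb, partc⟩
end
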